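/- arXiv:1809.06135 — 4 statements merged into one kernel-verified Lean document; each statement's English description precedes it below -/
import Mathlib

section
/- Let F be a finite field of cardinality p^n (p prime), and let d be a proper divisor of n. If u ∈ F satisfies u^(p^d − 1) = 1 (i.e., u lies in the subfield of order p^d), then u^((p^n − 1)/Φ_n(p)) = 1, where Φ_n is the n-th cyclotomic polynomial. -/
/-- If u lies in the subfield of order p^d of a finite field of order p^n,
then u^((p^n - 1)/Φ_n(p)) = 1. -/
theorem subfield_elt_pow_cofactor_eq_one (p n d : ℕ) (hp : p.Prime) (hn : 2 ≤ n)
    (hd : d ∣ n) (hd1 : 1 ≤ d) (hdn : d < n)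
    (F : Type*) [Field F] [Fintype F] (hcard : Fintype.card F = p ^ n)
    (u : F) (hu : u ^ (p ^ d - 1) = 1) :
    u ^ ((p ^ n - 1) / ((Polynomial.cyclotomic n ℤ).eval (p : ℤ)).toNat) = 1 := by
  have hp1 : (1 : ℤ) < (p : ℤ) := by exact_mod_cast hp.one_lt
  have hΦpos : 0 < (Polynomial.cyclotomic n ℤ).eval (p : ℤ) :=
    Polynomial.cyclotomic_pos' n hp1
  set Φ : ℤ := (Polynomial.cyclotomic n ℤ).eval (p : ℤ) with hΦ
  -- divisibility in ℤ
  have hmem : d ∈ n.properDivisors := Nat.mem_properDivisors.mpr ⟨hd, hdn⟩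
  have hdvd : ((p : ℤ) ^ d - 1) * Φ ∣ (p : ℤ) ^ n - 1 := by
    have := Polynomial.X_pow_sub_one_mul_cyclotomic_dvd_X_pow_sub_one_of_dvd ℤ hmem
    have := (Polynomial.eval_dvd (x := (p : ℤ)) this)
    simpa using this
  obtain ⟨c, hc⟩ := hdvd
  have hpd1 : (0 : ℤ) < (p : ℤ) ^ d - 1 := by
    have : (1 : ℤ) < (p : ℤ) ^ d := one_lt_pow₀ hp1 (by omega)
    omega
  have hpn1 : (0 : ℤ) < (p : ℤ) ^ n - 1 := by
    have : (1 : ℤ) < (p : ℤ) ^ n := one_lt_pow₀ hp1 (by omega)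
    omega
  have hcpos : 0 < c := by
    have hprod : 0 < ((p : ℤ) ^ d - 1) * Φ := mul_pos hpd1 hΦpos
    rcases lt_trichotomy c 0 with h | h | h
    · nlinarith [mul_neg_of_pos_of_neg hprod h]
    · simp [h] at hc; omega
    · exact h
  -- translate to ℕ
  have hnat : p ^ n - 1 = (p ^ d - 1) * Φ.toNat * c.toNat := by
    have h2 := Int.toNat_of_nonneg hΦpos.le
    have h3 := Int.toNat_of_nonneg hcpos.le
    zify [Nat.one_le_pow n p hp.pos, Nat.one_le_pow d p hp.pos]
    rw [h2, h3]
    exact hc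
  have hΦt : 0 < Φ.toNat := by omega
  have hdiv : (p ^ n - 1) / Φ.toNat = (p ^ d - 1) * c.toNat := by
    rw [hnat, mul_right_comm, Nat.mul_div_cancel _ hΦt]
  rw [hdiv, pow_mul, hu, one_pow]
end

section
/- Let F be a finite field of cardinality p^n (p prime, n ≥ 2), let ℓ be a prime dividing Φ_n(p) with ℓ not dividing n and ℓ ≠ p, let g be a generator of the multiplicative group F*, and let T, T' ∈ F* with T' = u·T where u lies in a proper subfield of F (u^(p^d − 1) = 1 for some proper divisor d of n). Then the discrete logarithms of T and T' to base g are congruent modulo ℓ, i.e., ℓ divides log_g T' − log_g T. -/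
/-- Discrete logs of T and T' = u·T (u in a proper subfield) agree modulo a
prime ℓ dividing Φ_n(p) with ℓ ∤ n and ℓ ≠ p. -/
theorem log_eq_mod_ell_of_subfield_multiple (p n d : ℕ) (hp : p.Prime) (hn : 2 ≤ n)
    (hd : d ∣ n) (hd1 : 1 ≤ d) (hdn : d < n)
    (F : Type*) [Field F] [Fintype F] (hcard : Fintype.card F = p ^ n)
    (g : Fˣ) (hg : orderOf g = p ^ n - 1)
    (T T' u : Fˣ) (hu : u ^ (p ^ d - 1) = 1) (hT' : T' = u * T)
    (ℓ : ℕ) (hl : ℓ.Prime) (hlΦ : (ℓ : ℤ) ∣ (Polynomial.cyclotomic n ℤ).eval (p : ℤ))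
    (hln : ¬ ℓ ∣ n) (hlp : ℓ ≠ p)
    (k k' : ℤ) (hk : g ^ k = T) (hk' : g ^ k' = T') :
    (ℓ : ℤ) ∣ k' - k := by
  have hgu : g ^ (k' - k) = u := by
    rw [zpow_sub, hk, hk', hT']
    group
  -- g ^ ((k'-k) * (p^d-1)) = 1
  have hone : g ^ ((k' - k) * ((p ^ d - 1 : ℕ) : ℤ)) = 1 := by
    rw [zpow_mul, hgu, zpow_natCast, hu]
  have hord : ((p ^ n - 1 : ℕ) : ℤ) ∣ (k' - k) * ((p ^ d - 1 : ℕ) : ℤ) := by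
    rw [← hg]
    exact orderOf_dvd_iff_zpow_eq_one.mpr hone
  -- ℓ divides p^n - 1
  have hcyc : (Polynomial.cyclotomic n ℤ).eval (p : ℤ) ∣ ((p ^ n - 1 : ℕ) : ℤ) := by
    have h := Polynomial.eval_dvd (x := (p : ℤ)) (Polynomial.cyclotomic.dvd_X_pow_sub_one n ℤ)
    simpa [Nat.cast_sub (Nat.one_le_pow n p hp.pos)] using h
  have hlpow : (ℓ : ℤ) ∣ (k' - k) * ((p ^ d - 1 : ℕ) : ℤ) :=
    dvd_trans (hlΦ.trans hcyc) hord
  -- ℓ does not divide p^d - 1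
  have hnz : NeZero (n : ZMod ℓ) := by
    refine ⟨fun h => hln ?_⟩
    exact (ZMod.natCast_eq_zero_iff n ℓ).mp h
  haveI : Fact ℓ.Prime := ⟨hl⟩
  have hroot : Polynomial.IsRoot (Polynomial.cyclotomic n (ZMod ℓ)) (p : ZMod ℓ) := by
    have : (Int.cast ((Polynomial.cyclotomic n ℤ).eval (p : ℤ)) : ZMod ℓ) = 0 :=
      (ZMod.intCast_zmod_eq_zero_iff_dvd _ ℓ).mpr hlΦ
    rw [Polynomial.IsRoot, ← Polynomial.map_cyclotomic_int n (ZMod ℓ),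
      Polynomial.eval_map, Polynomial.eval₂_at_natCast]
    simpa using this
  have hprim : IsPrimitiveRoot ((p : ZMod ℓ)) n :=
    (Polynomial.isRoot_cyclotomic_iff).mp hroot
  have hlnd : ¬ (ℓ : ℤ) ∣ ((p ^ d - 1 : ℕ) : ℤ) := by
    intro h
    have h' : ℓ ∣ p ^ d - 1 := by exact_mod_cast h
    have hpd : (p : ZMod ℓ) ^ d = 1 := by
      have := (ZMod.natCast_eq_zero_iff (p ^ d - 1) ℓ).mpr h'
      have h1 : ((p ^ d - 1 : ℕ) : ZMod ℓ) = (p : ZMod ℓ) ^ d - 1 := by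
        push_cast [Nat.cast_sub (Nat.one_le_pow d p hp.pos)]
        ring
      rw [h1] at this
      linear_combination this
    have := (hprim.pow_eq_one_iff_dvd d).mp hpd
    have := Nat.le_of_dvd hd1 this
    omega
  exact ((Nat.prime_iff_prime_int.mp hl).dvd_mul.mp hlpow).resolve_right hlnd
end

section
/- Let F be a finite field of order p^n (p prime), with subfield K of order p^d where d ∣ n, 1 ≤ d < n. Let T ∈ F* not lie in any proper subfield of F. Viewing F as F_p[x]/(ψ(x)) for an irreducible monic ψ ∈ F_p[x] of degree n, there exists a nonzero element P = u·T with u ∈ K* such that, when P is written as a polynomial of degree < n in the class of x, its coefficients in degrees n − d + 1, …, n − 1 all vanish; that is, P is represented by a polynomial of degree at most n − d. -/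
open Polynomial in
/-- For T ∈ F_{p^n}^* not in a proper subfield, there is a nonzero u in the
subfield of order p^d such that u·T is represented by a polynomial of degree
at most n - d in F_p[x]/(ψ). -/
theorem exists_low_degree_representative (p n d : ℕ) [Fact p.Prime]
    (hd : d ∣ n) (hd1 : 1 ≤ d) (hdn : d < n)
    (ψ : Polynomial (ZMod p)) (hmonic : ψ.Monic) (hirr : Irreducible ψ)
    (hdeg : ψ.natDegree = n)
    (T : AdjoinRoot ψ) (hT : ∀ m, m ∣ n → m < n → T ^ p ^ m ≠ T) :
    ∃ u : AdjoinRoot ψ, u ≠ 0 ∧ u ^ (p ^ d - 1) = 1 ∧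
      ∃ Q : Polynomial (ZMod p), Q.natDegree ≤ n - d ∧ AdjoinRoot.mk ψ Q = u * T := by
  classical
  haveI := Fact.mk hirr
  have hp : p.Prime := Fact.out
  have hp1 : 1 < p := hp.one_lt
  have hψ0 : ψ ≠ 0 := hirr.ne_zero
  let pb : PowerBasis (ZMod p) (AdjoinRoot ψ) := AdjoinRoot.powerBasis hψ0
  haveI : FiniteDimensional (ZMod p) (AdjoinRoot ψ) := Module.Finite.of_basis pb.basis
  haveI : Fintype (AdjoinRoot ψ) := Module.fintypeOfFintype pb.basis
  haveI hchar : CharP (AdjoinRoot ψ) p :=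
    charP_of_injective_algebraMap (algebraMap (ZMod p) (AdjoinRoot ψ)).injective p
  have hpd0 : p ^ d ≠ 0 := (pow_pos hp.pos d).ne'
  have hpd1 : 1 < p ^ d := Nat.one_lt_pow (by omega) hp1
  have hpn1 : 1 < p ^ n := Nat.one_lt_pow (by omega) hp1
  have hdim : pb.dim = n := by
    rw [show pb.dim = ψ.natDegree from rfl, hdeg]
  have hfr : Module.finrank (ZMod p) (AdjoinRoot ψ) = n := by rw [pb.finrank, hdim]
  have hcardF : Fintype.card (AdjoinRoot ψ) = p ^ n := by
    rw [Module.card_eq_pow_finrank (K := ZMod p) (V := AdjoinRoot ψ), ZMod.card, hfr]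
  have hT0 : T ≠ 0 := by
    intro h
    exact hT d hd hdn (by rw [h, zero_pow hpd0])
  -- the subfield of order p^d, as a ZMod p submodule
  let K' : Submodule (ZMod p) (AdjoinRoot ψ) :=
    { carrier := {u | u ^ p ^ d = u}
      add_mem' := fun {a b} ha hb => by
        simp only [Set.mem_setOf_eq] at *
        rw [add_pow_char_pow, ha, hb]
      zero_mem' := by simp [zero_pow hpd0]
      smul_mem' := fun c a ha => by
        simp only [Set.mem_setOf_eq] at *
        rw [Algebra.smul_def, mul_pow, ha, ← map_pow, ZMod.pow_card_pow] }
  -- counting the elements of K'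
  have hmem : ∀ u : AdjoinRoot ψ, u ∈ K' ↔ u ^ p ^ d = u := fun u => Iff.rfl
  let f : Polynomial (AdjoinRoot ψ) := X ^ p ^ n - X
  let g : Polynomial (AdjoinRoot ψ) := X ^ p ^ d - X
  have hf0 : f ≠ 0 := FiniteField.X_pow_card_sub_X_ne_zero (AdjoinRoot ψ) hpn1
  have hg0 : g ≠ 0 := FiniteField.X_pow_card_sub_X_ne_zero (AdjoinRoot ψ) hpd1
  have hfactor : ∀ m : ℕ, 1 ≤ m → (X : Polynomial (AdjoinRoot ψ)) ^ m - X = X * (X ^ (m - 1) - 1) := by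
    intro m hm
    rw [mul_sub, mul_one, ← pow_succ', Nat.sub_add_cancel hm]
  have hgf : g ∣ f := by
    obtain ⟨k, hk⟩ := hd
    have hdvd : p ^ d - 1 ∣ p ^ n - 1 := by
      have := Nat.sub_dvd_pow_sub_pow (p ^ d) 1 k
      simpa [← pow_mul, ← hk] using this
    obtain ⟨m, hm⟩ := hdvd
    have h1 : (X : Polynomial (AdjoinRoot ψ)) ^ (p ^ d - 1) - 1 ∣ X ^ (p ^ n - 1) - 1 := by
      have := sub_dvd_pow_sub_pow ((X : Polynomial (AdjoinRoot ψ)) ^ (p ^ d - 1)) 1 m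
      simpa [← pow_mul, ← hm] using this
    rw [show f = X ^ p ^ n - X from rfl, show g = X ^ p ^ d - X from rfl,
      hfactor _ hpd1.le, hfactor _ hpn1.le]
    exact mul_dvd_mul_left _ h1
  have hrootsf : f.roots = Finset.univ.val := by
    have := FiniteField.roots_X_pow_card_sub_X (AdjoinRoot ψ)
    rwa [hcardF] at this
  have hcardrootsf : Multiset.card f.roots = p ^ n := by
    rw [hrootsf]; simpa using hcardF
  obtain ⟨h', hh'⟩ := hgf
  have hh'0 : h' ≠ 0 := by
    intro h; rw [h, mul_zero] at hh'; exact hf0 hh'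
  have hdegf : f.natDegree = p ^ n := FiniteField.X_pow_card_sub_X_natDegree_eq (AdjoinRoot ψ) hpn1
  have hdegg : g.natDegree = p ^ d := FiniteField.X_pow_card_sub_X_natDegree_eq (AdjoinRoot ψ) hpd1
  have hdegh : h'.natDegree = p ^ n - p ^ d := by
    have := Polynomial.natDegree_mul hg0 hh'0
    rw [← hh', hdegf, hdegg] at this
    omega
  have hcardg : p ^ d ≤ Multiset.card g.roots := by
    have hsplit : f.roots = g.roots + h'.roots := by
      rw [hh']; exact Polynomial.roots_mul (hh' ▸ hf0)
    have h1 : Multiset.card h'.roots ≤ p ^ n - p ^ d := hdegh ▸ Polynomial.card_roots' h'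
    have h2 := hcardrootsf
    rw [hsplit, Multiset.card_add] at h2
    have hle : p ^ d ≤ p ^ n := Nat.pow_le_pow_right hp.pos hdn.le
    omega
  have hnodupg : g.roots.Nodup := by
    have hle : g.roots ≤ f.roots := Polynomial.roots.le_of_dvd hf0 ⟨h', hh'⟩
    exact Multiset.nodup_of_le hle (hrootsf ▸ Finset.univ.nodup)
  have hΓcard : (g.roots.toFinset).card = Multiset.card g.roots :=
    Multiset.toFinset_card_of_nodup hnodupg
  have hΓsub : (g.roots.toFinset : Set (AdjoinRoot ψ)) ⊆ (K' : Set (AdjoinRoot ψ)) := by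
    intro a ha
    rw [Finset.mem_coe, Multiset.mem_toFinset, Polynomial.mem_roots hg0] at ha
    have := ha
    rw [Polynomial.IsRoot, Polynomial.eval_sub, Polynomial.eval_pow, Polynomial.eval_X,
      sub_eq_zero] at this
    exact this
  haveI : Fintype K' := Fintype.ofFinite _
  have hcardK' : p ^ d ≤ Fintype.card K' := by
    calc p ^ d ≤ (g.roots.toFinset).card := hΓcard ▸ hcardg
      _ = (g.roots.toFinset : Set (AdjoinRoot ψ)).ncard := (Set.ncard_coe_finset _).symm
      _ ≤ (K' : Set (AdjoinRoot ψ)).ncard := Set.ncard_le_ncard hΓsub (Set.toFinite _)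
      _ = Nat.card K' := (Nat.card_coe_set_eq _).symm
      _ = Fintype.card K' := Nat.card_eq_fintype_card
  have hfrK' : d ≤ Module.finrank (ZMod p) K' := by
    have := Module.card_eq_pow_finrank (K := ZMod p) (V := K')
    rw [ZMod.card] at this
    rw [this] at hcardK'
    exact (Nat.pow_le_pow_iff_right hp1).mp hcardK'
  -- the submodule K' * T
  let S : Submodule (ZMod p) (AdjoinRoot ψ) := K'.map (LinearMap.mulRight (ZMod p) T)
  have hinj : Function.Injective (LinearMap.mulRight (ZMod p) T) := by
    intro a b hab
    exact mul_right_cancel₀ hT0 hab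
  have hfrS : d ≤ Module.finrank (ZMod p) S := by
    have := (K'.equivMapOfInjective _ hinj).finrank_eq
    rw [← this]; exact hfrK'
  -- the subspace of low-degree elements
  let W : Submodule (ZMod p) (AdjoinRoot ψ) :=
    Submodule.span (ZMod p) (Set.range fun i : Fin (n - d + 1) => AdjoinRoot.root ψ ^ (i : ℕ))
  have hli : LinearIndependent (ZMod p) fun i : Fin (n - d + 1) => AdjoinRoot.root ψ ^ (i : ℕ) := by
    have hb := pb.basis.linearIndependent
    have hlt : ∀ i : Fin (n - d + 1), (i : ℕ) < pb.dim := fun i => by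
      rw [hdim]; have := i.2; omega
    have h2 := hb.comp (fun i : Fin (n - d + 1) => (⟨(i : ℕ), hlt i⟩ : Fin pb.dim))
      (fun a b hab => by simpa [Fin.ext_iff] using hab)
    simpa [Function.comp_def, pb.coe_basis, pb, AdjoinRoot.powerBasis_gen] using h2
  have hfrW : Module.finrank (ZMod p) W = n - d + 1 := by
    rw [finrank_span_eq_card hli, Fintype.card_fin]
  -- the intersection is nontrivial
  have hne : S ⊓ W ≠ ⊥ := by
    intro hbot
    have h1 := Submodule.finrank_sup_add_finrank_inf_eq S W
    rw [hbot, finrank_bot, add_zero] at h1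
    have h2 : Module.finrank (ZMod p) ↥(S ⊔ W) ≤ n := hfr ▸ Submodule.finrank_le _
    omega
  obtain ⟨z, hz, hz0⟩ := (Submodule.ne_bot_iff _).mp hne
  obtain ⟨u, huK, huz⟩ := Submodule.mem_map.mp hz.1
  have huz : u * T = z := huz
  have hu0 : u ≠ 0 := by
    intro h; rw [h, zero_mul] at huz; exact hz0 huz.symm
  refine ⟨u, hu0, ?_, ?_⟩
  · have hu : u ^ p ^ d = u := huK
    have : u ^ (p ^ d - 1) * u = 1 * u := by
      rw [← pow_succ, Nat.sub_add_cancel hpd1.le, hu, one_mul]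
    exact mul_right_cancel₀ hu0 this
  · obtain ⟨c, hc⟩ := (Submodule.mem_span_range_iff_exists_fun (ZMod p)).mp hz.2
    refine ⟨∑ i : Fin (n - d + 1), Polynomial.C (c i) * Polynomial.X ^ (i : ℕ), ?_, ?_⟩
    · refine Polynomial.natDegree_sum_le_of_forall_le _ _ fun i _ => ?_
      calc (Polynomial.C (c i) * Polynomial.X ^ (i : ℕ)).natDegree
          ≤ ((Polynomial.X : Polynomial (ZMod p)) ^ (i : ℕ)).natDegree :=
            Polynomial.natDegree_C_mul_le _ _
        _ = (i : ℕ) := Polynomial.natDegree_X_pow _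
        _ ≤ n - d := by have := i.2; omega
    · rw [huz]
      rw [← hc]
      rw [map_sum]
      congr 1
      ext i
      rw [map_mul, map_pow, AdjoinRoot.mk_X, AdjoinRoot.mk_C, Algebra.smul_def,
        AdjoinRoot.algebraMap_eq]
end

section
/- Let p be prime, n ≥ 2, and let g be a generator of the multiplicative group of F = GF(p^n). For T₀ ∈ F*, t ∈ ℤ, and P ∈ F* with P = u · g^t · T₀ for some u in a proper subfield of F (u^(p^d −1) = 1, d a proper divisor of n), and let ℓ be a prime divisor of Φ_n(p) with ℓ ∤ n. Then log_g P ≡ t + log_g T₀ (mod ℓ). -/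
/-- Correctness of the initial splitting: if P = u · g^t · T₀ with u in a proper
subfield, then log_g P ≡ t + log_g T₀ (mod ℓ) for ℓ a prime dividing Φ_n(p), ℓ ∤ n. -/
theorem initial_splitting_log (p n d : ℕ) (hp : p.Prime) (hn : 2 ≤ n)
    (hd : d ∣ n) (hd1 : 1 ≤ d) (hdn : d < n)
    (F : Type*) [Field F] [Fintype F] (hcard : Fintype.card F = p ^ n)
    (g : Fˣ) (hg : orderOf g = p ^ n - 1)
    (T₀ P u : Fˣ) (t : ℤ) (hu : u ^ (p ^ d - 1) = 1) (hP : P = u * g ^ t * T₀)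
    (ℓ : ℕ) (hl : ℓ.Prime) (hlΦ : (ℓ : ℤ) ∣ (Polynomial.cyclotomic n ℤ).eval (p : ℤ))
    (hln : ¬ ℓ ∣ n)
    (k₀ kP : ℤ) (hk₀ : g ^ k₀ = T₀) (hkP : g ^ kP = P) :
    (ℓ : ℤ) ∣ kP - (t + k₀) := by
  set m : ℤ := kP - (t + k₀) with hm
  -- g ^ m = u
  have hgm : g ^ m = u := by
    have h1 : g ^ kP = u * g ^ t * g ^ k₀ := by rw [hkP, hP, hk₀]
    have : g ^ m = g ^ kP * (g ^ t * g ^ k₀)⁻¹ := by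
      rw [hm, zpow_sub, zpow_add]
    rw [this, h1]
    group
  -- hence g ^ (m * (p^d - 1)) = 1
  have hpow : g ^ (m * ((p ^ d - 1 : ℕ) : ℤ)) = 1 := by
    rw [zpow_mul, hgm, zpow_natCast, hu]
  have hdvd1 : ((p ^ n - 1 : ℕ) : ℤ) ∣ m * ((p ^ d - 1 : ℕ) : ℤ) := by
    rw [← hg]
    exact orderOf_dvd_iff_zpow_eq_one.2 hpow
  -- ℓ ∣ p ^ n - 1
  have hp1 : 1 ≤ p ^ n := Nat.one_le_pow _ _ hp.pos
  have hpd1 : 1 ≤ p ^ d := Nat.one_le_pow _ _ hp.pos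
  have hcast : ((p ^ n - 1 : ℕ) : ℤ) = (p : ℤ) ^ n - 1 := by
    push_cast [hp1]; ring
  have hℓpn : (ℓ : ℤ) ∣ ((p ^ n - 1 : ℕ) : ℤ) := by
    rw [hcast]
    refine hlΦ.trans ?_
    have := Polynomial.cyclotomic.dvd_X_pow_sub_one n ℤ
    have := Polynomial.eval_dvd (x := (p : ℤ)) this
    simpa using this
  -- ℓ does not divide p ^ d - 1
  have hnz : NeZero (n : ZMod ℓ) := by
    constructor
    intro h
    exact hln ((ZMod.natCast_eq_zero_iff n ℓ).1 h)
  haveI : Fact ℓ.Prime := ⟨hl⟩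
  have hroot : Polynomial.IsRoot (Polynomial.cyclotomic n (ZMod ℓ)) ((p : ℕ) : ZMod ℓ) := by
    have h0 : (((Polynomial.cyclotomic n ℤ).eval (p : ℤ) : ℤ) : ZMod ℓ) = 0 := by
      rcases hlΦ with ⟨c, hc⟩
      rw [hc]
      push_cast
      simp
    have hx : ((p : ℕ) : ZMod ℓ) = (Int.castRingHom (ZMod ℓ)) ((p : ℕ) : ℤ) := by
      simp
    unfold Polynomial.IsRoot
    rw [← Polynomial.map_cyclotomic_int n (ZMod ℓ), Polynomial.eval_map, hx,
      Polynomial.eval₂_hom]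
    exact h0
  have hprim : IsPrimitiveRoot ((p : ℕ) : ZMod ℓ) n :=
    (Polynomial.isRoot_cyclotomic_iff (μ := ((p : ℕ) : ZMod ℓ))).1 hroot
  have hnotdvd : ¬ (ℓ : ℤ) ∣ ((p ^ d - 1 : ℕ) : ℤ) := by
    intro h
    have hcastd : ((p ^ d - 1 : ℕ) : ℤ) = (p : ℤ) ^ d - 1 := by
      push_cast [hpd1]; ring
    rw [hcastd] at h
    have : ((p : ℕ) : ZMod ℓ) ^ d = 1 := by
      have : (((p : ℤ) ^ d - 1 : ℤ) : ZMod ℓ) = 0 := by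
        rcases h with ⟨c, hc⟩
        rw [hc]; push_cast; simp
      push_cast at this
      linear_combination this
    have hn_dvd : n ∣ d := hprim.pow_eq_one_iff_dvd d |>.1 this
    have := Nat.le_of_dvd (Nat.lt_of_lt_of_le Nat.zero_lt_one hd1) hn_dvd
    omega
  -- conclude
  have hℓdvd : (ℓ : ℤ) ∣ m * ((p ^ d - 1 : ℕ) : ℤ) := hℓpn.trans hdvd1
  rcases (Int.Prime.dvd_mul' hl hℓdvd) with h | h
  · exact h
  · exact absurd h hnotdvd
end
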